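/- Let 0 < ε ≤ 0.1, n ≥ 1, T ≥ 1. For any v* ∈ {1,…,n}, the expectation under P_{v*}^T of the likelihood ratio P_{v*}^T / P_0^T equals (1 + 4ε²)^T; that is, Σ_{g ∈ Ω^T} P_{v*}^T(g) · P_{v*}^T(g) / P_0^T(g) = (1 + 4ε²)^T. -/
import Mathlib


open scoped BigOperators

/-- The sample space of a single round: an advice vector `a ∈ {0,1}ⁿ`
and a correct-arm indicator `c ∈ {0,1}`. -/
abbrev Omg (n : ℕ) := (Fin n → Bool) × Bool

/-- Under `P0`, the advice vector is uniform on `{0,1}ⁿ` and the correct-arm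
indicator is uniform on `{0,1}`, independently. -/
noncomputable def P0 (n : ℕ) : Omg n → ℝ := fun _ => (1 / 2 : ℝ) ^ (n + 1)

/-- Under `Pv n ε v`, the advice vector is uniform on `{0,1}ⁿ` and, conditionally on it,
the correct-arm indicator equals its `v`-th entry with probability `1/2 + ε`. -/
noncomputable def Pv (n : ℕ) (ε : ℝ) (v : Fin n) : Omg n → ℝ := fun w =>
  (1 / 2 : ℝ) ^ n * (if w.2 = w.1 v then 1 / 2 + ε else 1 / 2 - ε)

/-- `T`-fold product of a probability mass function on `Omg n`. -/
noncomputable def prodP {n : ℕ} (T : ℕ) (P : Omg n → ℝ) : (Fin T → Omg n) → ℝ :=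
  fun g => ∏ t, P (g t)

lemma single_round (n : ℕ) (ε : ℝ) (v : Fin n) :
    ∑ w : Omg n, Pv n ε v w * (Pv n ε v w / P0 n w) = 1 + 4 * ε ^ 2 := by
  have hx : ((1 / 2 : ℝ) ^ n) ≠ 0 := by positivity
  rw [Fintype.sum_prod_type]
  have hstep : ∀ a : Fin n → Bool,
      ∑ c : Bool, Pv n ε v (a, c) * (Pv n ε v (a, c) / P0 n (a, c))
        = (1 / 2 : ℝ) ^ n * (1 + 4 * ε ^ 2) := by
    intro a
    simp only [Pv, P0, Fintype.sum_bool, pow_succ]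
    rcases Bool.dichotomy (a v) with h | h <;> simp only [h] <;> norm_num <;> field_simp <;> ring
  simp only [hstep, Finset.sum_const, Finset.card_univ, nsmul_eq_mul]
  have hcard : (Fintype.card (Fin n → Bool) : ℝ) = 2 ^ n := by
    simp [Fintype.card_fun]
  rw [hcard]
  have : (2 : ℝ) ^ n * (1 / 2 : ℝ) ^ n = 1 := by
    rw [← mul_pow]; norm_num
  rw [← mul_assoc, this, one_mul]

/-- the expectation under `P_{v*}^T` of the likelihood ratio
`P_{v*}^T / P_0^T` equals `(1 + 4ε²)^T`. -/
theorem stmt7 (n T : ℕ) (ε : ℝ) (hε : 0 < ε) (hε' : ε ≤ 0.1) (hn : 1 ≤ n) (hT : 1 ≤ T)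
    (vstar : Fin n) :
    ∑ g : Fin T → Omg n,
        prodP T (Pv n ε vstar) g * (prodP T (Pv n ε vstar) g / prodP T (P0 n) g)
      = (1 + 4 * ε ^ 2) ^ T := by
  have hfac : ∀ g : Fin T → Omg n,
      prodP T (Pv n ε vstar) g * (prodP T (Pv n ε vstar) g / prodP T (P0 n) g)
        = ∏ t, Pv n ε vstar (g t) * (Pv n ε vstar (g t) / P0 n (g t)) := by
    intro g
    simp only [prodP, ← Finset.prod_div_distrib, ← Finset.prod_mul_distrib]
  simp only [hfac]
  have h2 : ∑ x : Fin T → Omg n,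
      ∏ t, Pv n ε vstar (x t) * (Pv n ε vstar (x t) / P0 n (x t))
      = (∑ w : Omg n, Pv n ε vstar w * (Pv n ε vstar w / P0 n w)) ^ T :=
    (Fintype.sum_pow (fun w : Omg n => Pv n ε vstar w * (Pv n ε vstar w / P0 n w)) T).symm
  rw [h2, single_round]
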